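/- Let X1, X2 be i.i.d. uniform on [0,1], L = min(X1,X2), R = max(X1,X2). Define P = Π_{[L,R]}(1/2), the projection of 1/2 onto [L,R] (i.e., P = R if R < 1/2, P = 1/2 if L ≤ 1/2 ≤ R, and P = L if L > 1/2). Then Var(P) = 1/48 and P = 1/2 with probability 1/2. -/

import Mathlib

open MeasureTheory

/-- The uniform product measure on `[0,1]²`. -/
noncomputable def unifSq : Measure (ℝ × ℝ) :=
  (volume.restrict (Set.Icc (0:ℝ) 1)).prod (volume.restrict (Set.Icc (0:ℝ) 1))

/-- Projection of `x` onto the interval `[L,R]`. -/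
noncomputable def proj (L R x : ℝ) : ℝ := min (max x L) R

/-- Projection of `1/2` onto `[min q.1 q.2, max q.1 q.2]`. -/
noncomputable def anchorHalf (q : ℝ × ℝ) : ℝ :=
  proj (min q.1 q.2) (max q.1 q.2) (1/2)

open scoped ENNReal

lemma anchor_eq (x y : ℝ) : anchorHalf (x, y) = min (max (1/2) (min x y)) (max x y) := rfl

instance : IsProbabilityMeasure (volume.restrict (Set.Icc (0:ℝ) 1)) := by
  constructor
  simp [Real.volume_Icc]

instance : IsProbabilityMeasure unifSq := by
  unfold unifSq; infer_instance

lemma anchor_cont : Continuous anchorHalf := by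
  unfold anchorHalf proj
  fun_prop

lemma ae_mem : ∀ᵐ q ∂unifSq, q ∈ Set.Icc (0:ℝ) 1 ×ˢ Set.Icc (0:ℝ) 1 := by
  rw [ae_iff]
  have : {q : ℝ × ℝ | ¬ q ∈ Set.Icc (0:ℝ) 1 ×ˢ Set.Icc (0:ℝ) 1}
      = (Set.Icc (0:ℝ) 1 ×ˢ Set.Icc (0:ℝ) 1)ᶜ := rfl
  rw [this, Set.compl_prod_eq_union]
  refine measure_union_null ?_ ?_ <;>
  · unfold unifSq
    rw [Measure.prod_prod]
    simp [Measure.restrict_apply (measurableSet_Icc.compl)]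

lemma anchor_bound {q : ℝ × ℝ} (h : q ∈ Set.Icc (0:ℝ) 1 ×ˢ Set.Icc (0:ℝ) 1) :
    ‖anchorHalf q‖ ≤ 1 := by
  obtain ⟨⟨h1, h2⟩, h3, h4⟩ := h
  rw [Real.norm_eq_abs, abs_le]
  unfold anchorHalf proj
  constructor
  · simp only [le_min_iff, le_max_iff]
    constructor
    · left; norm_num
    · left; linarith
  · exact le_trans (min_le_right _ _) (by simp [h2, h4])

lemma anchor_memLp : MemLp anchorHalf 2 unifSq :=
  MemLp.of_bound anchor_cont.aestronglyMeasurable 1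
    (ae_mem.mono fun q hq => anchor_bound hq)

lemma anchor_int : Integrable anchorHalf unifSq :=
  memLp_one_iff_integrable.mp (MemLp.of_bound anchor_cont.aestronglyMeasurable 1
    (ae_mem.mono fun q hq => anchor_bound hq))

lemma anchor_sq_int : Integrable (fun q => anchorHalf q ^ 2) unifSq :=
  anchor_memLp.integrable_sq

lemma slice_cont (x : ℝ) : Continuous (fun y => anchorHalf (x, y)) :=
  anchor_cont.comp (by fun_prop)

lemma slice_ii (x a b : ℝ) : IntervalIntegrable (fun y => anchorHalf (x, y)) volume a b :=
  (slice_cont x).intervalIntegrable a b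

lemma slice_sq_ii (x a b : ℝ) :
    IntervalIntegrable (fun y => anchorHalf (x, y) ^ 2) volume a b :=
  ((slice_cont x).pow 2).intervalIntegrable a b

lemma eqOn1 {x : ℝ} (h0 : 0 ≤ x) (h : x ≤ 1/2) :
    ∀ y ∈ Set.uIcc (0:ℝ) x, anchorHalf (x, y) = x := by
  intro y hy
  rw [Set.uIcc_of_le h0] at hy
  rw [anchor_eq, min_eq_right hy.2, max_eq_left hy.2,
    max_eq_left (le_trans hy.2 h), min_eq_right h]

lemma eqOn2 {x : ℝ} (h : x ≤ 1/2) :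
    ∀ y ∈ Set.uIcc x (1/2 : ℝ), anchorHalf (x, y) = y := by
  intro y hy
  rw [Set.uIcc_of_le h] at hy
  rw [anchor_eq, min_eq_left hy.1, max_eq_right hy.1,
    max_eq_left (le_trans h ?_ )]
  · exact min_eq_right hy.2
  · linarith [hy.2]

lemma eqOn3 {x : ℝ} (h : x ≤ 1/2) :
    ∀ y ∈ Set.uIcc (1/2 : ℝ) 1, anchorHalf (x, y) = 1/2 := by
  intro y hy
  rw [Set.uIcc_of_le (by norm_num)] at hy
  have hxy : x ≤ y := le_trans h hy.1
  rw [anchor_eq, min_eq_left hxy, max_eq_right hxy, max_eq_left h, min_eq_left hy.1]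

lemma eqOn4 {x : ℝ} (h : 1/2 ≤ x) :
    ∀ y ∈ Set.uIcc (0:ℝ) (1/2), anchorHalf (x, y) = 1/2 := by
  intro y hy
  rw [Set.uIcc_of_le (by norm_num)] at hy
  have hxy : y ≤ x := le_trans hy.2 h
  rw [anchor_eq, min_eq_right hxy, max_eq_left hxy, max_eq_left hy.2,
    min_eq_left h]

lemma eqOn5 {x : ℝ} (h : 1/2 ≤ x) :
    ∀ y ∈ Set.uIcc (1/2 : ℝ) x, anchorHalf (x, y) = y := by
  intro y hy
  rw [Set.uIcc_of_le h] at hy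
  rw [anchor_eq, min_eq_right hy.2, max_eq_left hy.2, max_eq_right hy.1]
  exact min_eq_left hy.2

lemma eqOn6 {x : ℝ} (h : 1/2 ≤ x) (h1 : x ≤ 1) :
    ∀ y ∈ Set.uIcc x 1, anchorHalf (x, y) = x := by
  intro y hy
  rw [Set.uIcc_of_le h1] at hy
  rw [anchor_eq, min_eq_left hy.1, max_eq_right hy.1, max_eq_right h]
  exact min_eq_left hy.1

lemma inner1 {x : ℝ} (h0 : 0 ≤ x) (h : x ≤ 1/2) :
    ∫ y in (0:ℝ)..1, anchorHalf (x, y) = x^2/2 + 3/8 := by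
  rw [← intervalIntegral.integral_add_adjacent_intervals (slice_ii x 0 x) (slice_ii x x 1),
    ← intervalIntegral.integral_add_adjacent_intervals (slice_ii x x (1/2)) (slice_ii x (1/2) 1),
    intervalIntegral.integral_congr (eqOn1 h0 h),
    intervalIntegral.integral_congr (eqOn2 h),
    intervalIntegral.integral_congr (eqOn3 h),
    intervalIntegral.integral_const, intervalIntegral.integral_const, integral_id]
  simp only [smul_eq_mul]; ring

lemma inner2 {x : ℝ} (h : 1/2 ≤ x) (h1 : x ≤ 1) :
    ∫ y in (0:ℝ)..1, anchorHalf (x, y) = 1/8 + x - x^2/2 := by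
  rw [← intervalIntegral.integral_add_adjacent_intervals (slice_ii x 0 x) (slice_ii x x 1),
    ← intervalIntegral.integral_add_adjacent_intervals (slice_ii x 0 (1/2)) (slice_ii x (1/2) x),
    intervalIntegral.integral_congr (eqOn4 h),
    intervalIntegral.integral_congr (eqOn5 h),
    intervalIntegral.integral_congr (eqOn6 h h1),
    intervalIntegral.integral_const, intervalIntegral.integral_const, integral_id]
  simp only [smul_eq_mul]; ring

lemma sq_congr {a b : ℝ} {f g : ℝ → ℝ} (h : ∀ y ∈ Set.uIcc a b, f y = g y) :
    ∀ y ∈ Set.uIcc a b, f y ^ 2 = g y ^ 2 := fun y hy => by rw [h y hy]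

lemma inner1sq {x : ℝ} (h0 : 0 ≤ x) (h : x ≤ 1/2) :
    ∫ y in (0:ℝ)..1, anchorHalf (x, y) ^ 2 = 2/3 * x^3 + 1/6 := by
  rw [← intervalIntegral.integral_add_adjacent_intervals (slice_sq_ii x 0 x) (slice_sq_ii x x 1),
    ← intervalIntegral.integral_add_adjacent_intervals (slice_sq_ii x x (1/2)) (slice_sq_ii x (1/2) 1),
    intervalIntegral.integral_congr (sq_congr (eqOn1 h0 h)),
    intervalIntegral.integral_congr (sq_congr (eqOn2 h)),
    intervalIntegral.integral_congr (sq_congr (eqOn3 h)),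
    intervalIntegral.integral_const, intervalIntegral.integral_const,
    integral_pow]
  push_cast
  simp only [smul_eq_mul]; ring

lemma inner2sq {x : ℝ} (h : 1/2 ≤ x) (h1 : x ≤ 1) :
    ∫ y in (0:ℝ)..1, anchorHalf (x, y) ^ 2 = 1/12 + x^2 - 2/3 * x^3 := by
  rw [← intervalIntegral.integral_add_adjacent_intervals (slice_sq_ii x 0 x) (slice_sq_ii x x 1),
    ← intervalIntegral.integral_add_adjacent_intervals (slice_sq_ii x 0 (1/2)) (slice_sq_ii x (1/2) x),
    intervalIntegral.integral_congr (sq_congr (eqOn4 h)),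
    intervalIntegral.integral_congr (sq_congr (eqOn5 h)),
    intervalIntegral.integral_congr (sq_congr (eqOn6 h h1)),
    intervalIntegral.integral_const, intervalIntegral.integral_const,
    integral_pow]
  push_cast
  simp only [smul_eq_mul]; ring

lemma restrict_to_interval (g : ℝ → ℝ) :
    ∫ y, g y ∂(volume.restrict (Set.Icc (0:ℝ) 1)) = ∫ y in (0:ℝ)..1, g y := by
  rw [intervalIntegral.integral_of_le zero_le_one, ← MeasureTheory.integral_Icc_eq_integral_Ioc]

lemma ii_of_eqOn {f g : ℝ → ℝ} {a b : ℝ} (hab : a ≤ b)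
    (h : Set.EqOn f g (Set.uIcc a b)) (hg : IntervalIntegrable g volume a b) :
    IntervalIntegrable f volume a b := by
  rw [intervalIntegrable_iff_integrableOn_Ioc_of_le hab] at *
  exact (integrableOn_congr_fun (fun y hy => h (by
      rw [Set.uIcc_of_le hab]; exact Set.mem_Icc.mpr ⟨le_of_lt hy.1, hy.2⟩)) measurableSet_Ioc).mpr hg

lemma int_anchor : ∫ q, anchorHalf q ∂unifSq
    = ∫ x in (0:ℝ)..1, ∫ y in (0:ℝ)..1, anchorHalf (x, y) := by
  unfold unifSq
  rw [MeasureTheory.integral_prod _ anchor_int]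
  simp_rw [restrict_to_interval]

lemma int_anchor_sq : ∫ q, anchorHalf q ^ 2 ∂unifSq
    = ∫ x in (0:ℝ)..1, ∫ y in (0:ℝ)..1, anchorHalf (x, y) ^ 2 := by
  unfold unifSq
  rw [MeasureTheory.integral_prod _ anchor_sq_int]
  simp_rw [restrict_to_interval]

lemma poly1 : ∫ x in (0:ℝ)..(1/2), (x^2/2 + 3/8) = 5/24 := by
  rw [intervalIntegral.integral_eq_sub_of_hasDerivAt
    (f := fun x => x^3/6 + 3*x/8)
    (fun x _ => by
      convert ((hasDerivAt_pow 3 x).div_const 6).add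
        (((hasDerivAt_id x).const_mul 3).div_const 8) using 1
      · funext y; simp only [Pi.add_apply, Pi.sub_apply, id]
      · push_cast; ring)
    ((Continuous.intervalIntegrable (by fun_prop) _ _))]
  norm_num

lemma poly2 : ∫ x in (1/2 : ℝ)..1, (1/8 + x - x^2/2) = 7/24 := by
  rw [intervalIntegral.integral_eq_sub_of_hasDerivAt
    (f := fun x => x/8 + x^2/2 - x^3/6)
    (fun x _ => by
      convert (((hasDerivAt_id x).div_const 8).add
        ((hasDerivAt_pow 2 x).div_const 2)).sub ((hasDerivAt_pow 3 x).div_const 6) using 1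
      · funext y; simp only [Pi.add_apply, Pi.sub_apply, id]
      · push_cast; ring)
    ((Continuous.intervalIntegrable (by fun_prop) _ _))]
  norm_num

lemma poly3 : ∫ x in (0:ℝ)..(1/2), (2/3 * x^3 + 1/6) = 3/32 := by
  rw [intervalIntegral.integral_eq_sub_of_hasDerivAt
    (f := fun x => x^4/6 + x/6)
    (fun x _ => by
      convert ((hasDerivAt_pow 4 x).div_const 6).add ((hasDerivAt_id x).div_const 6) using 1
      · funext y; simp only [Pi.add_apply, Pi.sub_apply, id]
      · push_cast; ring)
    ((Continuous.intervalIntegrable (by fun_prop) _ _))]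
  norm_num

lemma poly4 : ∫ x in (1/2 : ℝ)..1, (1/12 + x^2 - 2/3 * x^3) = 17/96 := by
  rw [intervalIntegral.integral_eq_sub_of_hasDerivAt
    (f := fun x => x/12 + x^3/3 - x^4/6)
    (fun x _ => by
      convert (((hasDerivAt_id x).div_const 12).add
        ((hasDerivAt_pow 3 x).div_const 3)).sub ((hasDerivAt_pow 4 x).div_const 6) using 1
      · funext y; simp only [Pi.add_apply, Pi.sub_apply, id]
      · push_cast; ring)
    ((Continuous.intervalIntegrable (by fun_prop) _ _))]
  norm_num

lemma mean_anchor : ∫ q, anchorHalf q ∂unifSq = 1/2 := by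
  rw [int_anchor]
  have e1 : Set.EqOn (fun x => ∫ y in (0:ℝ)..1, anchorHalf (x, y))
      (fun x => x^2/2 + 3/8) (Set.uIcc (0:ℝ) (1/2)) := fun x hx => by
    rw [Set.uIcc_of_le (by norm_num)] at hx
    exact inner1 hx.1 hx.2
  have e2 : Set.EqOn (fun x => ∫ y in (0:ℝ)..1, anchorHalf (x, y))
      (fun x => 1/8 + x - x^2/2) (Set.uIcc (1/2 : ℝ) 1) := fun x hx => by
    rw [Set.uIcc_of_le (by norm_num)] at hx
    exact inner2 hx.1 hx.2
  rw [← intervalIntegral.integral_add_adjacent_intervals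
      (ii_of_eqOn (by norm_num) e1 (Continuous.intervalIntegrable (by fun_prop) _ _))
      (ii_of_eqOn (by norm_num) e2 (Continuous.intervalIntegrable (by fun_prop) _ _)),
    intervalIntegral.integral_congr e1, intervalIntegral.integral_congr e2, poly1, poly2]
  norm_num

lemma mean_anchor_sq : ∫ q, anchorHalf q ^ 2 ∂unifSq = 13/48 := by
  rw [int_anchor_sq]
  have e1 : Set.EqOn (fun x => ∫ y in (0:ℝ)..1, anchorHalf (x, y) ^ 2)
      (fun x => 2/3 * x^3 + 1/6) (Set.uIcc (0:ℝ) (1/2)) := fun x hx => by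
    rw [Set.uIcc_of_le (by norm_num)] at hx
    exact inner1sq hx.1 hx.2
  have e2 : Set.EqOn (fun x => ∫ y in (0:ℝ)..1, anchorHalf (x, y) ^ 2)
      (fun x => 1/12 + x^2 - 2/3 * x^3) (Set.uIcc (1/2 : ℝ) 1) := fun x hx => by
    rw [Set.uIcc_of_le (by norm_num)] at hx
    exact inner2sq hx.1 hx.2
  rw [← intervalIntegral.integral_add_adjacent_intervals
      (ii_of_eqOn (by norm_num) e1 (Continuous.intervalIntegrable (by fun_prop) _ _))
      (ii_of_eqOn (by norm_num) e2 (Continuous.intervalIntegrable (by fun_prop) _ _)),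
    intervalIntegral.integral_congr e1, intervalIntegral.integral_congr e2, poly3, poly4]
  norm_num

lemma enn1 : (1:ℝ≥0∞)/2 * (1/2) = 1/4 := by
  simp only [one_div]
  rw [← ENNReal.ofReal_ofNat 4, ← ENNReal.ofReal_ofNat 2,
    ← ENNReal.ofReal_inv_of_pos (by norm_num : (0:ℝ) < 2),
    ← ENNReal.ofReal_inv_of_pos (by norm_num : (0:ℝ) < 4),
    ← ENNReal.ofReal_mul (by norm_num)]
  norm_num

lemma enn2 : (1:ℝ≥0∞)/4 + 1/4 = 1/2 := by
  simp only [one_div]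
  rw [← ENNReal.ofReal_ofNat 4, ← ENNReal.ofReal_ofNat 2,
    ← ENNReal.ofReal_inv_of_pos (by norm_num : (0:ℝ) < 2),
    ← ENNReal.ofReal_inv_of_pos (by norm_num : (0:ℝ) < 4),
    ← ENNReal.ofReal_add (by norm_num) (by norm_num)]
  norm_num

lemma enn3 : ENNReal.ofReal (1/2) = 1/2 := by
  simp only [one_div]
  rw [← ENNReal.ofReal_ofNat 2, ← ENNReal.ofReal_inv_of_pos (by norm_num : (0:ℝ) < 2)]

lemma anchor_eq_half {x y : ℝ} (h1 : min x y ≤ 1/2) (h2 : 1/2 ≤ max x y) :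
    anchorHalf (x, y) = 1/2 := by
  rw [anchor_eq, max_eq_left h1, min_eq_left h2]

lemma compl_eq : {q : ℝ × ℝ | anchorHalf q = 1/2}ᶜ
    = (Set.Ioi (1/2:ℝ) ×ˢ Set.Ioi (1/2:ℝ)) ∪ (Set.Iio (1/2:ℝ) ×ˢ Set.Iio (1/2:ℝ)) := by
  ext ⟨x, y⟩
  simp only [Set.mem_compl_iff, Set.mem_setOf_eq, Set.mem_union, Set.mem_prod, Set.mem_Ioi,
    Set.mem_Iio]
  constructor
  · intro h
    by_contra hc
    push_neg at hc
    obtain ⟨hc1, hc2⟩ := hc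
    apply h
    apply anchor_eq_half
    · rcases le_or_gt x (1/2) with h' | h'
      · exact le_trans (min_le_left _ _) h'
      · exact le_trans (min_le_right _ _) (hc1 h')
    · rcases le_or_gt (1/2) x with h' | h'
      · exact le_trans h' (le_max_left _ _)
      · exact le_trans (hc2 h') (le_max_right _ _)
  · rintro (⟨hx, hy⟩ | ⟨hx, hy⟩) h
    · have hm : (1:ℝ)/2 < min x y := lt_min hx hy
      rw [anchor_eq, max_eq_right hm.le, min_eq_left (min_le_max)] at h
      exact hm.ne' h
    · have hm : max x y < 1/2 := max_lt hx hy
      rw [anchor_eq, max_eq_left (le_trans min_le_max hm.le), min_eq_right hm.le] at h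
      exact absurd h hm.ne

lemma half_measure : (volume.restrict (Set.Icc (0:ℝ) 1)) (Set.Ioi (1/2:ℝ)) = 1/2 ∧
    (volume.restrict (Set.Icc (0:ℝ) 1)) (Set.Iio (1/2:ℝ)) = 1/2 := by
  constructor
  · rw [Measure.restrict_apply measurableSet_Ioi]
    have : Set.Ioi (1/2:ℝ) ∩ Set.Icc 0 1 = Set.Ioc (1/2:ℝ) 1 := by
      ext t; simp only [Set.mem_inter_iff, Set.mem_Ioi, Set.mem_Icc, Set.mem_Ioc]
      constructor
      · rintro ⟨h1, _, h3⟩; exact ⟨h1, h3⟩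
      · rintro ⟨h1, h2⟩; exact ⟨h1, by linarith, h2⟩
    rw [this, Real.volume_Ioc, show (1:ℝ) - 1/2 = 1/2 by norm_num, enn3]
  · rw [Measure.restrict_apply measurableSet_Iio]
    have : Set.Iio (1/2:ℝ) ∩ Set.Icc 0 1 = Set.Ico (0:ℝ) (1/2) := by
      ext t; simp only [Set.mem_inter_iff, Set.mem_Iio, Set.mem_Icc, Set.mem_Ico]
      constructor
      · rintro ⟨h1, h2, _⟩; exact ⟨h2, h1⟩
      · rintro ⟨h1, h2⟩; exact ⟨h2, h1, by linarith⟩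
    rw [this, Real.volume_Ico, show (1:ℝ)/2 - 0 = 1/2 by norm_num, enn3]

lemma measure_half : unifSq {q : ℝ × ℝ | anchorHalf q = 1/2} = 1/2 := by
  have hS : MeasurableSet {q : ℝ × ℝ | anchorHalf q = 1/2} :=
    (isClosed_singleton.preimage anchor_cont).measurableSet
  have hcompl : unifSq {q : ℝ × ℝ | anchorHalf q = 1/2}ᶜ = 1/2 := by
    rw [compl_eq, measure_union ?_ (measurableSet_Iio.prod measurableSet_Iio)]
    · unfold unifSq
      rw [Measure.prod_prod, Measure.prod_prod, half_measure.1, half_measure.2, enn1, enn2]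
    · rw [Set.disjoint_left]
      rintro ⟨x, y⟩ ⟨hx, _⟩ ⟨hx', _⟩
      exact absurd (Set.mem_Ioi.mp hx) (not_lt.mpr (Set.mem_Iio.mp hx').le)
  have h2 := measure_compl (μ := unifSq) hS (measure_ne_top unifSq _)
  rw [measure_univ] at h2
  calc unifSq {q : ℝ × ℝ | anchorHalf q = 1/2}
      = 1 - (1 - unifSq {q : ℝ × ℝ | anchorHalf q = 1/2}) :=
        (ENNReal.sub_sub_cancel (by norm_num) ((measure_mono (Set.subset_univ _)).trans_eq measure_univ)).symm
    _ = 1 - 1/2 := by rw [← h2, hcompl]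
    _ = 1/2 := by norm_num

theorem stmt_1 :
    ProbabilityTheory.variance anchorHalf unifSq = 1/48 ∧
    unifSq {q : ℝ × ℝ | anchorHalf q = 1/2} = 1/2 := by
  refine ⟨?_, measure_half⟩
  rw [ProbabilityTheory.variance_eq_sub anchor_memLp]
  simp only [Pi.pow_apply]
  rw [mean_anchor_sq, mean_anchor]
  norm_num
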